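/- Let S ⊆ ℝ^d be a nonempty closed set with 0 ∈ S and t·S ⊆ S for all t > 0, and let A_S be the associated envelope function. Then there exists a constant C > 0 such that for every h ∈ GL(d,ℝ) satisfying ‖h − I‖ < 1/2 (operator norm) and hᵀS ⊆ S, and for every ξ ∈ ℝ^d: A_S(hᵀξ) ≤ C · A_S(ξ). -/

import Mathlib

open MeasureTheory Matrix Metric

noncomputable section

variable {n : Type*} [Fintype n] [DecidableEq n]

/-- The dual action `ξ ↦ hᵀ ξ` of a matrix on Euclidean space. -/
def dualAct (h : Matrix n n ℝ) (ξ : EuclideanSpace ℝ n) : EuclideanSpace ℝ n :=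
  (EuclideanSpace.equiv n ℝ).symm (h.transpose.mulVec (EuclideanSpace.equiv n ℝ ξ))

/-- The envelope function `A_S` of a set `S` (with respect to Euclidean norm and distance). -/
def env (S : Set (EuclideanSpace ℝ n)) (ξ : EuclideanSpace ℝ n) : ℝ :=
  min (infDist ξ S / (1 + Real.sqrt (‖ξ‖ ^ 2 - infDist ξ S ^ 2))) (1 / (1 + ‖ξ‖))

/-- The Euclidean operator norm of a matrix. -/
def opNorm (m : Matrix n n ℝ) : ℝ :=
  ‖LinearMap.toContinuousLinearMap (Matrix.toEuclideanLin m)‖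

/-- The dual orbit of `ξ₀` under a subgroup `H ≤ GL(d,ℝ)`. -/
def dualOrbit (H : Subgroup (GL n ℝ)) (ξ₀ : EuclideanSpace ℝ n) : Set (EuclideanSpace ℝ n) :=
  {ξ | ∃ h : GL n ℝ, h ∈ H ∧ dualAct (↑h) ξ₀ = ξ}

/-- The envelope function pulled back to the group: `A_H(h) = A_𝒪(hᵀ ξ₀)`. -/
def AH (H : Subgroup (GL n ℝ)) (ξ₀ : EuclideanSpace ℝ n) (h : ↥H) : ℝ :=
  env (dualOrbit H ξ₀)ᶜ (dualAct (↑(h : GL n ℝ)) ξ₀)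

end

section Aux

variable {n : Type*} [Fintype n] [DecidableEq n]

open scoped Matrix.Norms.L2Operator in
lemma aux_opNorm_eq (m : Matrix n n ℝ) : opNorm m = ‖m‖ := rfl

open scoped Matrix.Norms.L2Operator in
lemma aux_dualAct_le (m : Matrix n n ℝ) (x : EuclideanSpace ℝ n) :
    ‖dualAct m x‖ ≤ opNorm m * ‖x‖ := by
  have h1 := Matrix.l2_opNorm_mulVec mᵀ x
  have h2 : ‖mᵀ‖ = ‖m‖ := by
    rw [← Matrix.conjTranspose_eq_transpose_of_trivial, Matrix.l2_opNorm_conjTranspose]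
  rw [aux_opNorm_eq]
  rw [h2] at h1
  exact h1

lemma aux_dualAct_sub (m : Matrix n n ℝ) (x y : EuclideanSpace ℝ n) :
    dualAct m (x - y) = dualAct m x - dualAct m y := by
  simp [dualAct, Matrix.mulVec_sub]

lemma aux_dualAct_sub_one (m : Matrix n n ℝ) (x : EuclideanSpace ℝ n) :
    dualAct (m - 1) x = dualAct m x - x := by
  simp [dualAct, Matrix.sub_mulVec, Matrix.transpose_sub, Matrix.transpose_one, Matrix.one_mulVec]
  rfl

set_option maxHeartbeats 1000000 in
lemma aux_scalar_ineq (a b r ρ : ℝ) (ha : 0 ≤ a) (hb : 0 ≤ b) (har : a ≤ r) (hbρ : b ≤ ρ)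
    (h1 : b ≤ 3/2 * a) (h3 : r ≤ 2 * ρ) :
    min (b / (1 + Real.sqrt (ρ^2 - b^2))) (1 / (1 + ρ)) ≤
      8 * min (a / (1 + Real.sqrt (r^2 - a^2))) (1 / (1 + r)) := by
  have hr0 : 0 ≤ r := ha.trans har
  have hρ0 : 0 ≤ ρ := hb.trans hbρ
  set P := Real.sqrt (r^2 - a^2) with hPdef
  set Q := Real.sqrt (ρ^2 - b^2) with hQdef
  have hP0 : 0 ≤ P := Real.sqrt_nonneg _
  have hQ0 : 0 ≤ Q := Real.sqrt_nonneg _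
  have hP2 : P^2 = r^2 - a^2 := Real.sq_sqrt (by nlinarith)
  have hQ2 : Q^2 = ρ^2 - b^2 := Real.sq_sqrt (by nlinarith)
  have hPr : P ≤ r := by
    calc P ≤ Real.sqrt (r^2) := Real.sqrt_le_sqrt (by nlinarith)
    _ = r := Real.sqrt_sq hr0
  have h1P : (0:ℝ) < 1 + P := by linarith
  have h1Q : (0:ℝ) < 1 + Q := by linarith
  have h1r : (0:ℝ) < 1 + r := by linarith
  have h1ρ : (0:ℝ) < 1 + ρ := by linarith
  rcases le_or_gt (1/(1+r)) (a/(1+P)) with hc | hc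
  · rw [min_eq_right hc]
    calc min (b / (1 + Q)) (1 / (1 + ρ)) ≤ 1/(1+ρ) := min_le_right _ _
    _ ≤ 8 * (1/(1+r)) := by
        rw [show (8:ℝ) * (1/(1+r)) = 8/(1+r) by ring, div_le_div_iff₀ h1ρ h1r]
        nlinarith
  · rw [min_eq_left hc.le]
    rcases le_or_gt (4*a) P with h4 | h4
    · have hQP : P ≤ 3 * Q := by
        have key : (P/3)^2 ≤ ρ^2 - b^2 := by
          nlinarith [mul_le_mul h3 h3 hr0 (by linarith), mul_le_mul h1 h1 hb (by linarith),
            mul_le_mul h4 h4 (by linarith) hP0]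
        have : P/3 ≤ Q := by
          rw [hQdef, show P/3 = Real.sqrt ((P/3)^2) from (Real.sqrt_sq (by linarith)).symm]
          exact Real.sqrt_le_sqrt key
        linarith
      calc min (b / (1 + Q)) (1 / (1 + ρ)) ≤ b/(1+Q) := min_le_left _ _
      _ ≤ 8 * (a/(1+P)) := by
          rw [show (8:ℝ) * (a/(1+P)) = 8*a/(1+P) by ring, div_le_div_iff₀ h1Q h1P]
          nlinarith [mul_le_mul h1 hQP hP0 (by linarith : (0:ℝ) ≤ 3/2*a), mul_nonneg ha hQ0]
    · have hc' : a * (1+r) < 1 * (1+P) := (div_lt_div_iff₀ h1P h1r).mp hc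
      have ha1 : a < 1 := by
        by_contra hch
        push_neg at hch
        have := mul_le_mul_of_nonneg_right hch h1r.le
        linarith
      have hP4 : P < 4 := by linarith
      calc min (b / (1 + Q)) (1 / (1 + ρ)) ≤ b/(1+Q) := min_le_left _ _
      _ ≤ b := div_le_self hb (by linarith)
      _ ≤ 8 * (a/(1+P)) := by
          rw [show (8:ℝ) * (a/(1+P)) = 8*a/(1+P) by ring, le_div_iff₀ h1P]
          nlinarith [mul_le_mul h1 hP4.le hP0 (by linarith : (0:ℝ) ≤ 3/2*a)]

end Aux


/-- Let `S ⊆ ℝ^d` be closed, nonempty, containing `0` and stable under positive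
dilations. Then there is `C > 0` such that for every `h ∈ GL(d,ℝ)` with `‖h − I‖ < 1/2` and
`hᵀS ⊆ S`, and every `ξ`, we have `A_S(hᵀξ) ≤ C·A_S(ξ)`. -/
theorem stmt7 (d : ℕ) (S : Set (EuclideanSpace ℝ (Fin d)))
    (hSclosed : IsClosed S) (hSne : S.Nonempty)
    (h0S : (0 : EuclideanSpace ℝ (Fin d)) ∈ S)
    (hcone : ∀ t : ℝ, 0 < t → ∀ ξ ∈ S, t • ξ ∈ S) :
    ∃ C : ℝ, 0 < C ∧ ∀ h : GL (Fin d) ℝ,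
      opNorm ((↑h : Matrix (Fin d) (Fin d) ℝ) - 1) < 1 / 2 →
      (∀ ξ ∈ S, dualAct (↑h) ξ ∈ S) →
      ∀ ξ : EuclideanSpace ℝ (Fin d), env S (dualAct (↑h) ξ) ≤ C * env S ξ := by
  refine ⟨8, by norm_num, ?_⟩
  intro h hnorm hSstab ξ
  set m : Matrix (Fin d) (Fin d) ℝ := (↑h : Matrix (Fin d) (Fin d) ℝ) with hm
  -- basic perturbation estimates
  have key : ∀ v : EuclideanSpace ℝ (Fin d), ‖dualAct m v - v‖ ≤ (1/2) * ‖v‖ := by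
    intro v
    have := aux_dualAct_le (m - 1) v
    rw [aux_dualAct_sub_one] at this
    refine this.trans ?_
    exact mul_le_mul_of_nonneg_right hnorm.le (norm_nonneg _)
  have lip : ∀ v : EuclideanSpace ℝ (Fin d), ‖dualAct m v‖ ≤ 3/2 * ‖v‖ := by
    intro v
    have h1 := key v
    have h2 : ‖dualAct m v‖ - ‖v‖ ≤ ‖dualAct m v - v‖ := norm_sub_norm_le _ _
    linarith
  set η := dualAct m ξ with hηdef
  have hlow : ‖ξ‖ ≤ 2 * ‖η‖ := by
    have h1 : ‖η - ξ‖ ≤ 1/2 * ‖ξ‖ := key ξ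
    have h2 : ‖ξ‖ - ‖η‖ ≤ ‖ξ - η‖ := norm_sub_norm_le ξ η
    rw [norm_sub_rev] at h2
    linarith
  -- infDist bounds
  have ha0 : 0 ≤ infDist ξ S := infDist_nonneg
  have hb0 : 0 ≤ infDist η S := infDist_nonneg
  have har : infDist ξ S ≤ ‖ξ‖ := by
    simpa using infDist_le_dist_of_mem (x := ξ) h0S
  have hbρ : infDist η S ≤ ‖η‖ := by
    simpa using infDist_le_dist_of_mem (x := η) h0S
  have hbb : infDist η S ≤ 3/2 * infDist ξ S := by
    have step : ∀ s ∈ S, 2/3 * infDist η S ≤ dist ξ s := by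
      intro s hs
      have h1 : infDist η S ≤ dist η (dualAct m s) := infDist_le_dist_of_mem (hSstab s hs)
      have h2 : dist η (dualAct m s) ≤ 3/2 * dist ξ s := by
        rw [dist_eq_norm, dist_eq_norm, ← aux_dualAct_sub]
        exact lip _
      linarith
    have h23 : 2/3 * infDist η S ≤ infDist ξ S := by
      by_contra hcon
      push_neg at hcon
      obtain ⟨y, hy, hlt⟩ := (infDist_lt_iff hSne).mp hcon
      exact absurd (step y hy) (by linarith)
    linarith
  -- conclude via the scalar inequality
  have := aux_scalar_ineq (infDist ξ S) (infDist η S) ‖ξ‖ ‖η‖ ha0 hb0 har hbρ hbb hlow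
  simpa [env] using this
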